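/- Let V be a compact manifold with nonempty boundary, with basepoint in ∂V, let p : DV → V be the folding map of the double DV = ∂(V × I) (given by p(v,0) = v, p(v,t) = v for v ∈ ∂V, p(v,1) = v), and let F be the homotopy fiber of the boundary inclusion ι : ∂V → V. Then the homotopy fiber P of p is homotopy equivalent to the suspension ΣF. -/

import Mathlib

open unitInterval Topology Topology.Homotopy Manifold ContinuousMap Function

noncomputable section

/-- The homotopy fibre of `p : E → B` over `b`. -/
abbrev HomotopyFiber {E B : Type*} [TopologicalSpace E] [TopologicalSpace B]
    (p : C(E, B)) (b : B) : Type _ :=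
  {q : E × C(I, B) // q.2 0 = p q.1 ∧ q.2 1 = b}

/-- The canonical basepoint of the homotopy fibre of a pointed map. -/
abbrev HomotopyFiber.basePoint {E B : Type*} [TopologicalSpace E] [TopologicalSpace B]
    (p : C(E, B)) {e : E} {b : B} (h : p e = b) : HomotopyFiber p b :=
  ⟨(e, ContinuousMap.const _ b), by simp [h], rfl⟩

/-- The (unreduced) suspension of a space. -/
abbrev Susp (X : Type*) [TopologicalSpace X] : Type _ :=
  Quot (fun a b : X × I => (a.2 = 0 ∧ b.2 = 0) ∨ (a.2 = 1 ∧ b.2 = 1))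

/-- The basepoint of the suspension determined by a point of `X`. -/
abbrev Susp.pt {X : Type*} [TopologicalSpace X] (x : X) : Susp X :=
  Quot.mk _ (x, 0)

/-- The double mapping cylinder (homotopy pushout) `X ∪_f (A × I) ∪_g Y`
of maps `f : A → X` and `g : A → Y`. -/
abbrev DoubleCyl {A X Y : Type*} [TopologicalSpace A] [TopologicalSpace X]
    [TopologicalSpace Y] (f : C(A, X)) (g : C(A, Y)) : Type _ :=
  Quot (fun p q : (X ⊕ (A × I)) ⊕ Y =>
    (∃ a, p = .inl (.inl (f a)) ∧ q = .inl (.inr (a, 0))) ∨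
    (∃ a, p = .inr (g a) ∧ q = .inl (.inr (a, 1))))
/-- The inclusion of the boundary of the manifold `V`, as a continuous map. -/
def bIncl (k : ℕ) [NeZero k] (V : Type*) [TopologicalSpace V]
    [ChartedSpace (EuclideanHalfSpace k) V] : C(((𝓡∂ k).boundary V : Set V), V) :=
  ⟨Subtype.val, continuous_subtype_val⟩

/-- The double `DV = ∂(V × I) = (V × {0}) ∪ (∂V × I) ∪ (V × {1})` of the manifold `V`,
as a subspace of `V × I`. -/
abbrev DoubleSp (k : ℕ) [NeZero k] (V : Type*) [TopologicalSpace V]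
    [ChartedSpace (EuclideanHalfSpace k) V] : Set (V × I) :=
  {p | p.2 = 0 ∨ p.2 = 1 ∨ p.1 ∈ (𝓡∂ k).boundary V}

/-- The folding map `p : DV → V`, given by `p(v,0) = v`, `p(v,t) = v` for `v ∈ ∂V`,
`p(v,1) = v`. -/
def foldMap (k : ℕ) [NeZero k] (V : Type*) [TopologicalSpace V]
    [ChartedSpace (EuclideanHalfSpace k) V] : C(DoubleSp k V, V) :=
  ⟨fun q => q.1.1, continuous_fst.comp continuous_subtype_val⟩

/-- The inclusion `i : DV = ∂(V × I) → V × I`. -/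
def dIncl (k : ℕ) [NeZero k] (V : Type*) [TopologicalSpace V]
    [ChartedSpace (EuclideanHalfSpace k) V] : C(DoubleSp k V, V × I) :=
  ⟨Subtype.val, continuous_subtype_val⟩

namespace SuspAux

/-! ### Real-valued reparametrisation functions -/

def tauR (t : ℝ) : ℝ := min 1 (max 0 (2 * t - 1/2))

lemma tauR_nonneg (t : ℝ) : 0 ≤ tauR t := le_min one_pos.le (le_max_left _ _)

lemma tauR_le_one (t : ℝ) : tauR t ≤ 1 := min_le_left _ _

lemma tauR_eq_zero {t : ℝ} (h : t ≤ 1/4) : tauR t = 0 := by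
  have h2 : max 0 (2 * t - 1/2) = 0 := max_eq_left (by linarith)
  rw [tauR, h2]; norm_num

lemma tauR_eq_one {t : ℝ} (h : 3/4 ≤ t) : tauR t = 1 :=
  min_eq_left (le_max_of_le_right (by linarith))

lemma tauR_le_quarter {t : ℝ} (h : t ≤ 3/8) : tauR t ≤ 1/4 :=
  le_trans (min_le_right _ _) (max_le (by norm_num) (by linarith))

lemma tauR_ge_quarter {t : ℝ} (h : 3/8 ≤ t) : 1/4 ≤ tauR t :=
  le_min (by norm_num) (le_max_of_le_right (by linarith))

lemma tauR_le_threequarter {t : ℝ} (h : t ≤ 5/8) : tauR t ≤ 3/4 :=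
  le_trans (min_le_right _ _) (max_le (by norm_num) (by linarith))

lemma tauR_ge_threequarter {t : ℝ} (h : 5/8 ≤ t) : 3/4 ≤ tauR t :=
  le_min (by norm_num) (le_max_of_le_right (by linarith))

lemma le_of_tauR_ge {t : ℝ} (h : 1/4 ≤ tauR t) : 3/8 ≤ t := by
  have h1 : (1/4 : ℝ) ≤ max 0 (2 * t - 1/2) := le_trans h (min_le_right _ _)
  rcases le_max_iff.1 h1 with h2 | h2
  · norm_num at h2
  · linarith

lemma le_of_tauR_le {t : ℝ} (h : tauR t ≤ 3/4) : t ≤ 5/8 := by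
  by_contra hc
  push_neg at hc
  have h2 : (3/4 : ℝ) < tauR t :=
    lt_min (by norm_num) (lt_max_iff.2 (Or.inr (by linarith)))
  linarith

lemma continuous_tauR : Continuous tauR := by unfold tauR; fun_prop

def wR (t : ℝ) : ℝ := max 0 (1 - 4 * t) + max 0 (4 * t - 3)

lemma wR_nonneg (t : ℝ) : 0 ≤ wR t :=
  add_nonneg (le_max_left _ _) (le_max_left _ _)

lemma wR_le_one {t : ℝ} (h0 : 0 ≤ t) (h1 : t ≤ 1) : wR t ≤ 1 := by
  rcases le_total t (1/2) with h | h
  · have h2 : max 0 (4 * t - 3) = 0 := max_eq_left (by linarith)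
    have h3 : max 0 (1 - 4 * t) ≤ 1 := max_le (by norm_num) (by linarith)
    rw [wR, h2]; linarith
  · have h2 : max 0 (1 - 4 * t) = 0 := max_eq_left (by linarith)
    have h3 : max 0 (4 * t - 3) ≤ 1 := max_le (by norm_num) (by linarith)
    rw [wR, h2]; linarith

lemma wR_eq_zero {t : ℝ} (h1 : 1/4 ≤ t) (h2 : t ≤ 3/4) : wR t = 0 := by
  rw [wR, max_eq_left (by linarith), max_eq_left (by linarith)]; ring

lemma wR_zero : wR 0 = 1 := by norm_num [wR]

lemma wR_one : wR 1 = 1 := by norm_num [wR]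

lemma continuous_wR : Continuous wR := by unfold wR; fun_prop

def aR (s : ℝ) : ℝ := min (2 * s) 1

def bR (s : ℝ) : ℝ := max (2 * s - 1) 0

lemma bR_nonneg (s : ℝ) : 0 ≤ bR s := le_max_right _ _

lemma bR_le_one {s : ℝ} (h : s ≤ 1) : bR s ≤ 1 := max_le (by linarith) (by norm_num)

lemma aR_nonneg {s : ℝ} (h : 0 ≤ s) : 0 ≤ aR s := le_min (by linarith) (by norm_num)

lemma aR_le_one (s : ℝ) : aR s ≤ 1 := min_le_right _ _

lemma aR_zero : aR 0 = 0 := by norm_num [aR]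

lemma aR_one : aR 1 = 1 := by norm_num [aR]

lemma bR_zero : bR 0 = 0 := by norm_num [bR]

lemma bR_one : bR 1 = 1 := by norm_num [bR]

lemma aR_eq_one_of_bR_pos {s : ℝ} (h : 0 < bR s) : aR s = 1 := by
  rcases lt_max_iff.1 h with h2 | h2
  · exact min_eq_right (by linarith)
  · norm_num at h2

/-! ### I-valued versions -/

def tauI (t : I) : I := ⟨tauR t.1, tauR_nonneg _, tauR_le_one _⟩

def wI (t : I) : I := ⟨wR t.1, wR_nonneg _, wR_le_one t.2.1 t.2.2⟩

lemma continuous_tauI : Continuous tauI :=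
  (continuous_tauR.comp continuous_subtype_val).subtype_mk _

lemma continuous_wI : Continuous wI :=
  (continuous_wR.comp continuous_subtype_val).subtype_mk _

lemma tauI_zero : tauI 0 = 0 := Subtype.ext (tauR_eq_zero (by norm_num))

lemma tauI_one : tauI 1 = 1 := Subtype.ext (tauR_eq_one (by norm_num))

lemma wI_zero : wI 0 = 1 := Subtype.ext (by simpa [wI] using wR_zero)

lemma wI_one : wI 1 = 1 := Subtype.ext (by simpa [wI] using wR_one)

/-! ### Affine reparametrisation of the interval -/

def affI : C(I × I, I) :=
  ⟨fun p => ⟨p.1.1 + (1 - p.1.1) * p.2.1,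
    add_nonneg p.1.2.1 (mul_nonneg (by linarith [p.1.2.2]) p.2.2.1),
    by nlinarith [p.1.2.1, p.1.2.2, p.2.2.1, p.2.2.2]⟩,
    by fun_prop⟩

lemma affI_apply (w s : I) : (affI (w, s) : ℝ) = w.1 + (1 - w.1) * s.1 := rfl

lemma affI_left_zero (s : I) : affI (0, s) = s := Subtype.ext (by
  show (0 : ℝ) + (1 - 0) * s.1 = s.1; ring)

lemma affI_left_one (s : I) : affI (1, s) = 1 := Subtype.ext (by
  show (1 : ℝ) + (1 - 1) * s.1 = 1; ring)

lemma affI_right_zero (w : I) : affI (w, 0) = w := Subtype.ext (by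
  show (w : ℝ) + (1 - w) * ((0 : I) : ℝ) = w
  norm_num)

lemma affI_right_one (w : I) : affI (w, 1) = 1 := Subtype.ext (by
  show (w : ℝ) + (1 - w) * ((1 : I) : ℝ) = 1
  norm_num)

/-! ### Path reparametrisation -/

variable {V : Type*} [TopologicalSpace V]

def repar : C(C(I, V) × I, C(I, V)) :=
  ContinuousMap.curry
    ⟨fun q => q.1.1 (affI (q.1.2, q.2)), by
      exact continuous_eval.comp ((continuous_fst.comp continuous_fst).prodMk
        (affI.continuous.comp ((continuous_snd.comp continuous_fst).prodMk continuous_snd)))⟩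

lemma repar_apply (γ : C(I, V)) (w s : I) : repar (γ, w) s = γ (affI (w, s)) := rfl

lemma repar_zero (γ : C(I, V)) : repar (γ, 0) = γ := by
  ext s; rw [repar_apply, affI_left_zero]

lemma repar_one_apply (γ : C(I, V)) (s : I) : repar (γ, 1) s = γ 1 := by
  rw [repar_apply, affI_left_one]

end SuspAux

section Main

open SuspAux

variable (k : ℕ) [NeZero k] (V : Type*) [TopologicalSpace V]
  [ChartedSpace (EuclideanHalfSpace k) V] (v₀ : V)

lemma Pext {a b : HomotopyFiber (foldMap k V) v₀} (h1 : a.1.1.1 = b.1.1.1)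
    (h2 : a.1.2 = b.1.2) : a = b :=
  Subtype.ext (Prod.ext_iff.mpr ⟨Subtype.ext h1, h2⟩)

/-- The map `F × I → P` inducing the homotopy inverse `ΣF → P`. -/
def rTil (q : HomotopyFiber (bIncl k V) v₀ × I) : HomotopyFiber (foldMap k V) v₀ := by
  refine ⟨(⟨(q.1.1.2 (wI q.2), tauI q.2), ?_⟩, repar (q.1.1.2, wI q.2)), ?_, ?_⟩
  · rcases le_total q.2.1 (1/4) with h | h
    · exact Or.inl (Subtype.ext (tauR_eq_zero h))
    · rcases le_total q.2.1 (3/4) with h' | h'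
      · refine Or.inr (Or.inr ?_)
        have hw : wI q.2 = 0 := Subtype.ext (wR_eq_zero h h')
        rw [hw]
        have h0 : q.1.1.2 0 = (q.1.1.1 : V) := q.1.2.1
        rw [h0]
        exact q.1.1.1.2
      · exact Or.inr (Or.inl (Subtype.ext (tauR_eq_one h')))
  · rw [repar_apply, affI_right_zero]; rfl
  · rw [repar_apply, affI_right_one]; exact q.1.2.2

lemma continuous_rTil : Continuous (rTil k V v₀) := by
  have hγ : Continuous fun q : (HomotopyFiber (bIncl k V) v₀) × I => q.1.1.2 :=
    continuous_snd.comp (continuous_subtype_val.comp continuous_fst)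
  have hw : Continuous fun q : (HomotopyFiber (bIncl k V) v₀) × I => wI q.2 :=
    continuous_wI.comp continuous_snd
  apply Continuous.subtype_mk
  apply Continuous.prodMk
  · apply Continuous.subtype_mk
    apply Continuous.prodMk
    · exact continuous_eval.comp (hγ.prodMk hw)
    · exact continuous_tauI.comp continuous_snd
  · exact repar.continuous.comp (hγ.prodMk hw)

lemma rTil_pole {f g : HomotopyFiber (bIncl k V) v₀} {t : I} (h : wI t = 1) :
    rTil k V v₀ (f, t) = rTil k V v₀ (g, t) := by
  apply Pext
  · show (f.1.2 (wI t), tauI t) = (g.1.2 (wI t), tauI t)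
    rw [h, f.2.2, g.2.2]
  · ext s
    show repar (f.1.2, wI t) s = repar (g.1.2, wI t) s
    rw [h, repar_one_apply, repar_one_apply, f.2.2, g.2.2]

lemma rTil_sound : ∀ a b : (HomotopyFiber (bIncl k V) v₀) × I,
    ((a.2 = 0 ∧ b.2 = 0) ∨ (a.2 = 1 ∧ b.2 = 1)) → rTil k V v₀ a = rTil k V v₀ b := by
  rintro ⟨f, t⟩ ⟨g, u⟩ (⟨h1, h2⟩ | ⟨h1, h2⟩)
  · subst h1; subst h2; exact rTil_pole k V v₀ (wI_zero)
  · subst h1; subst h2; exact rTil_pole k V v₀ (wI_one)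

/-- The homotopy inverse `ΣF → P`. -/
def rMap : C(Susp (HomotopyFiber (bIncl k V) v₀), HomotopyFiber (foldMap k V) v₀) :=
  ⟨Quot.lift (rTil k V v₀) (rTil_sound k V v₀),
    continuous_quot_lift _ (continuous_rTil k V v₀)⟩

variable (hv₀ : v₀ ∈ (𝓡∂ k).boundary V)

/-- Basepoint of `F`. -/
def f0 : HomotopyFiber (bIncl k V) v₀ :=
  ⟨(⟨v₀, hv₀⟩, ContinuousMap.const I v₀), rfl, rfl⟩

/-- The `F`-component used in defining `q : P → ΣF`. -/
def Bmap (x : HomotopyFiber (foldMap k V) v₀) : HomotopyFiber (bIncl k V) v₀ := by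
  classical
  exact if h : x.1.1.1.1 ∈ (𝓡∂ k).boundary V then
    ⟨(⟨x.1.1.1.1, h⟩, x.1.2), by exact x.2.1, x.2.2⟩
  else f0 k V v₀ hv₀

open scoped Classical in
/-- The underlying function of `q : P → ΣF`. -/
def qFun (x : HomotopyFiber (foldMap k V) v₀) : Susp (HomotopyFiber (bIncl k V) v₀) :=
  if 1/4 ≤ x.1.1.1.2.1 ∧ x.1.1.1.2.1 ≤ 3/4
    then Quot.mk _ (Bmap k V v₀ hv₀ x, tauI x.1.1.1.2)
    else Quot.mk _ (f0 k V v₀ hv₀, tauI x.1.1.1.2)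

lemma qFun_continuous : Continuous (qFun k V v₀ hv₀) := by
  classical
  have hTc : Continuous fun x : HomotopyFiber (foldMap k V) v₀ => x.1.1.1.2.1 :=
    continuous_subtype_val.comp (continuous_snd.comp
      (continuous_subtype_val.comp (continuous_fst.comp continuous_subtype_val)))
  have hs : IsClosed {x : HomotopyFiber (foldMap k V) v₀ |
      1/4 ≤ x.1.1.1.2.1 ∧ x.1.1.1.2.1 ≤ 3/4} := by
    have : {x : HomotopyFiber (foldMap k V) v₀ | 1/4 ≤ x.1.1.1.2.1 ∧ x.1.1.1.2.1 ≤ 3/4} =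
        (fun x : HomotopyFiber (foldMap k V) v₀ => x.1.1.1.2.1) ⁻¹' (Set.Icc (1/4) (3/4)) := rfl
    rw [this]
    exact isClosed_Icc.preimage hTc
  have hu : IsClosed {x : HomotopyFiber (foldMap k V) v₀ |
      x.1.1.1.2.1 ≤ 1/4 ∨ 3/4 ≤ x.1.1.1.2.1} := by
    have : {x : HomotopyFiber (foldMap k V) v₀ | x.1.1.1.2.1 ≤ 1/4 ∨ 3/4 ≤ x.1.1.1.2.1} =
        (fun x : HomotopyFiber (foldMap k V) v₀ => x.1.1.1.2.1) ⁻¹'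
          (Set.Iic (1/4) ∪ Set.Ici (3/4)) := rfl
    rw [this]
    exact (isClosed_Iic.union isClosed_Ici).preimage hTc
  unfold qFun
  apply continuous_if
  · intro a ha
    have h1 : a ∈ {x : HomotopyFiber (foldMap k V) v₀ |
        1/4 ≤ x.1.1.1.2.1 ∧ x.1.1.1.2.1 ≤ 3/4} := by
      have := frontier_subset_closure (s := {x : HomotopyFiber (foldMap k V) v₀ |
        1/4 ≤ x.1.1.1.2.1 ∧ x.1.1.1.2.1 ≤ 3/4}) ha
      rwa [hs.closure_eq] at this
    have h2 : a ∈ {x : HomotopyFiber (foldMap k V) v₀ |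
        x.1.1.1.2.1 ≤ 1/4 ∨ 3/4 ≤ x.1.1.1.2.1} := by
      have hsub : {x : HomotopyFiber (foldMap k V) v₀ |
          ¬(1/4 ≤ x.1.1.1.2.1 ∧ x.1.1.1.2.1 ≤ 3/4)} ⊆
          {x : HomotopyFiber (foldMap k V) v₀ | x.1.1.1.2.1 ≤ 1/4 ∨ 3/4 ≤ x.1.1.1.2.1} := by
        intro x hx
        rcases not_and_or.1 hx with h | h
        · exact Or.inl (le_of_not_ge h)
        · exact Or.inr (le_of_not_ge h)
      rw [frontier_eq_closure_inter_closure] at ha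
      have ha2 := ha.2
      rw [← Set.compl_setOf] at hsub
      exact closure_minimal hsub hu ha2
    have htau : tauI a.1.1.1.2 = 0 ∨ tauI a.1.1.1.2 = 1 := by
      rcases h2 with h | h
      · exact Or.inl (Subtype.ext (tauR_eq_zero h))
      · exact Or.inr (Subtype.ext (tauR_eq_one h))
    rcases htau with h | h
    · exact Quot.sound (Or.inl ⟨h, h⟩)
    · exact Quot.sound (Or.inr ⟨h, h⟩)
  · rw [hs.closure_eq]
    rw [continuousOn_iff_continuous_restrict]
    have hb : ∀ y : {x : HomotopyFiber (foldMap k V) v₀ |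
        1/4 ≤ x.1.1.1.2.1 ∧ x.1.1.1.2.1 ≤ 3/4},
        y.1.1.1.1.1 ∈ (𝓡∂ k).boundary V := by
      intro y
      rcases y.1.1.1.2 with h | h | h
      · exfalso
        have hval : y.1.1.1.1.2.1 = 0 := by rw [h]; rfl
        have := y.2.1
        rw [hval] at this
        norm_num at this
      · exfalso
        have hval : y.1.1.1.1.2.1 = 1 := by rw [h]; rfl
        have := y.2.2
        rw [hval] at this
        norm_num at this
      · exact h
    have heq : (Set.restrict {x : HomotopyFiber (foldMap k V) v₀ |
          1/4 ≤ x.1.1.1.2.1 ∧ x.1.1.1.2.1 ≤ 3/4}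
          (fun x => (Quot.mk _ (Bmap k V v₀ hv₀ x, tauI x.1.1.1.2) :
            Susp (HomotopyFiber (bIncl k V) v₀)))) =
        fun y => (Quot.mk _ ((⟨(⟨y.1.1.1.1.1, hb y⟩, y.1.1.2), by exact y.1.2.1,
          by exact y.1.2.2⟩ : HomotopyFiber (bIncl k V) v₀), tauI y.1.1.1.1.2) :
            Susp (HomotopyFiber (bIncl k V) v₀)) := by
      funext y
      change (Quot.mk _ (Bmap k V v₀ hv₀ y.1, tauI y.1.1.1.1.2) :
        Susp (HomotopyFiber (bIncl k V) v₀)) = _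
      unfold Bmap
      simp only [hb y, ↓reduceDIte]
    refine (congrArg Continuous heq).mpr ?_
    apply continuous_quot_mk.comp
    apply Continuous.prodMk
    · apply Continuous.subtype_mk
      apply Continuous.prodMk
      · apply Continuous.subtype_mk
        exact continuous_fst.comp (continuous_subtype_val.comp
          (continuous_fst.comp (continuous_subtype_val.comp continuous_subtype_val)))
      · exact continuous_snd.comp (continuous_subtype_val.comp continuous_subtype_val)
    · exact continuous_tauI.comp (continuous_snd.comp (continuous_subtype_val.comp
        (continuous_fst.comp (continuous_subtype_val.comp continuous_subtype_val))))
  · apply Continuous.continuousOn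
    apply continuous_quot_mk.comp
    exact (continuous_const.prodMk (continuous_tauI.comp (continuous_snd.comp
      (continuous_subtype_val.comp (continuous_fst.comp continuous_subtype_val)))))

/-- The map `q : P → ΣF`. -/
def qMap : C(HomotopyFiber (foldMap k V) v₀, Susp (HomotopyFiber (bIncl k V) v₀)) :=
  ⟨qFun k V v₀ hv₀, qFun_continuous k V v₀ hv₀⟩

end Main

namespace SuspAux2

open SuspAux

def sigR (s t : ℝ) : ℝ := (1 - s) * tauR (tauR t) + s * t

lemma sigR_nonneg {s t : ℝ} (hs0 : 0 ≤ s) (hs1 : s ≤ 1) (ht0 : 0 ≤ t) : 0 ≤ sigR s t :=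
  add_nonneg (mul_nonneg (by linarith) (tauR_nonneg _)) (mul_nonneg hs0 ht0)

lemma sigR_le_one {s t : ℝ} (hs0 : 0 ≤ s) (hs1 : s ≤ 1) (ht1 : t ≤ 1) : sigR s t ≤ 1 := by
  have h1 := tauR_le_one (tauR t)
  have h2 := tauR_nonneg (tauR t)
  rw [sigR]; nlinarith

lemma sigR_s0 (t : ℝ) : sigR 0 t = tauR (tauR t) := by rw [sigR]; ring

lemma sigR_s1 (t : ℝ) : sigR 1 t = t := by rw [sigR]; ring

lemma sigR_t0 (s : ℝ) : sigR s 0 = 0 := by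
  have h0 : tauR 0 = 0 := tauR_eq_zero (by norm_num)
  rw [sigR, h0, h0]; ring

lemma sigR_t1 (s : ℝ) : sigR s 1 = 1 := by
  have h1 : tauR 1 = 1 := tauR_eq_one (by norm_num)
  rw [sigR, h1, h1]; ring

lemma continuous_sigR : Continuous fun q : ℝ × ℝ => sigR q.1 q.2 := by
  unfold sigR tauR; fun_prop

def sigI (s t : I) : I :=
  ⟨sigR s.1 t.1, sigR_nonneg s.2.1 s.2.2 t.2.1, sigR_le_one s.2.1 s.2.2 t.2.2⟩

lemma sigI_t0 (s : I) : sigI s 0 = 0 := Subtype.ext (sigR_t0 s.1)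

lemma sigI_t1 (s : I) : sigI s 1 = 1 := Subtype.ext (sigR_t1 s.1)

lemma sigI_s1 (t : I) : sigI 1 t = t := Subtype.ext (sigR_s1 t.1)

def wsR (s t : ℝ) : ℝ := (1 - aR s) * wR (tauR t)

def hhR (s t : ℝ) : ℝ := (1 - bR s) * tauR (tauR t) + bR s * t

lemma wsR_nonneg {s : ℝ} (t : ℝ) (hs1 : s ≤ 1) : 0 ≤ wsR s t :=
  mul_nonneg (by linarith [aR_le_one s]) (wR_nonneg _)

lemma wsR_le_one {s : ℝ} (t : ℝ) (hs0 : 0 ≤ s) : wsR s t ≤ 1 := by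
  have h1 := aR_nonneg hs0
  have h2 := aR_le_one s
  have h3 := wR_nonneg (tauR t)
  have h4 := wR_le_one (tauR_nonneg t) (tauR_le_one t)
  rw [wsR]; nlinarith

lemma hhR_nonneg {s t : ℝ} (hs1 : s ≤ 1) (ht0 : 0 ≤ t) : 0 ≤ hhR s t :=
  add_nonneg (mul_nonneg (by linarith [bR_le_one hs1]) (tauR_nonneg _))
    (mul_nonneg (bR_nonneg _) ht0)

lemma hhR_le_one {s t : ℝ} (hs1 : s ≤ 1) (ht1 : t ≤ 1) : hhR s t ≤ 1 := by
  have h1 := bR_nonneg s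
  have h2 := bR_le_one hs1
  have h3 := tauR_nonneg (tauR t)
  have h4 := tauR_le_one (tauR t)
  rw [hhR]; nlinarith

lemma wsR_s0 (t : ℝ) : wsR 0 t = wR (tauR t) := by rw [wsR, aR_zero]; ring

lemma wsR_s1 (t : ℝ) : wsR 1 t = 0 := by rw [wsR, aR_one]; ring

lemma hhR_s0 (t : ℝ) : hhR 0 t = tauR (tauR t) := by rw [hhR, bR_zero]; ring

lemma hhR_s1 (t : ℝ) : hhR 1 t = t := by rw [hhR, bR_one]; ring

lemma hhR_t0 (s : ℝ) : hhR s 0 = 0 := by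
  have h0 : tauR 0 = 0 := tauR_eq_zero (by norm_num)
  rw [hhR, h0, h0]; ring

lemma hhR_t1 (s : ℝ) : hhR s 1 = 1 := by
  have h1 : tauR 1 = 1 := tauR_eq_one (by norm_num)
  rw [hhR, h1, h1]; ring

lemma hhR_of_b0 {s : ℝ} (t : ℝ) (h : bR s = 0) : hhR s t = tauR (tauR t) := by
  rw [hhR, h]; ring

lemma wsR_of_a1 {s : ℝ} (t : ℝ) (h : aR s = 1) : wsR s t = 0 := by rw [wsR, h]; ring

lemma continuous_wsR : Continuous fun q : ℝ × ℝ => wsR q.1 q.2 := by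
  unfold wsR aR wR tauR; fun_prop

lemma continuous_hhR : Continuous fun q : ℝ × ℝ => hhR q.1 q.2 := by
  unfold hhR bR tauR; fun_prop

def wsI (s t : I) : I := ⟨wsR s.1 t.1, wsR_nonneg _ s.2.2, wsR_le_one _ s.2.1⟩

def hhI (s t : I) : I := ⟨hhR s.1 t.1, hhR_nonneg s.2.2 t.2.1, hhR_le_one s.2.2 t.2.2⟩

lemma wsI_s1 (t : I) : wsI 1 t = 0 := Subtype.ext (wsR_s1 t.1)

lemma hhI_s1 (t : I) : hhI 1 t = t := Subtype.ext (hhR_s1 t.1)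

lemma hhI_s0 (t : I) : hhI 0 t = tauI (tauI t) := Subtype.ext (hhR_s0 t.1)

lemma wsI_s0 (t : I) : wsI 0 t = wI (tauI t) := Subtype.ext (wsR_s0 t.1)

end SuspAux2

section Main2

open SuspAux SuspAux2

variable (k : ℕ) [NeZero k] (V : Type*) [TopologicalSpace V]
  [ChartedSpace (EuclideanHalfSpace k) V] (v₀ : V)

/-- The homotopy `q ∘ r ≃ id` on `ΣF`, before quotienting. -/
def hSuspCur : C((HomotopyFiber (bIncl k V) v₀) × I,
    C(I, Susp (HomotopyFiber (bIncl k V) v₀))) :=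
  ContinuousMap.curry
    ⟨fun q => Quot.mk _ (q.1.1, sigI q.2 q.1.2), by
      apply continuous_quot_mk.comp
      apply Continuous.prodMk
      · exact continuous_fst.comp continuous_fst
      · exact Continuous.subtype_mk (continuous_sigR.comp
          ((continuous_subtype_val.comp continuous_snd).prodMk
            (continuous_subtype_val.comp (continuous_snd.comp continuous_fst)))) _⟩

lemma hSusp_sound : ∀ a b : (HomotopyFiber (bIncl k V) v₀) × I,
    ((a.2 = 0 ∧ b.2 = 0) ∨ (a.2 = 1 ∧ b.2 = 1)) →
    hSuspCur k V v₀ a = hSuspCur k V v₀ b := by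
  rintro ⟨f, t⟩ ⟨g, u⟩ (⟨h1, h2⟩ | ⟨h1, h2⟩) <;> subst h1 <;> subst h2 <;> ext s
  · exact Quot.sound (Or.inl ⟨sigI_t0 s, sigI_t0 s⟩)
  · exact Quot.sound (Or.inr ⟨sigI_t1 s, sigI_t1 s⟩)

set_option synthInstance.maxHeartbeats 1000000 in
def hSuspMap : C(I × Susp (HomotopyFiber (bIncl k V) v₀),
    Susp (HomotopyFiber (bIncl k V) v₀)) :=
  ⟨fun p => Quot.lift (fun a => hSuspCur k V v₀ a) (hSusp_sound k V v₀) p.2 p.1, by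
    exact (continuous_eval :
        Continuous fun p : C(I, Susp (HomotopyFiber (bIncl k V) v₀)) × I => p.1 p.2).comp
      (((continuous_quot_lift _ (hSuspCur k V v₀).continuous).comp
        continuous_snd).prodMk continuous_fst)⟩

variable (hv₀ : v₀ ∈ (𝓡∂ k).boundary V)

set_option maxHeartbeats 1000000 in
/-- The homotopy `q ∘ r ≃ id` on `ΣF`. -/
def hSusp : ContinuousMap.Homotopy
    ((qMap k V v₀ hv₀).comp (rMap k V v₀)) (ContinuousMap.id _) where
  toContinuousMap := hSuspMap k V v₀
  map_one_left := by
    intro z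
    induction z using Quot.ind with
    | _ a =>
      obtain ⟨f, t⟩ := a
      show (Quot.mk _ (f, sigI 1 t) : Susp (HomotopyFiber (bIncl k V) v₀)) = _
      rw [sigI_s1]
      rfl
  map_zero_left := by
    intro z
    induction z using Quot.ind with
    | _ a =>
      obtain ⟨f, t⟩ := a
      have hL : (hSuspMap k V v₀).toFun
          (0, Quot.mk (fun a b : (HomotopyFiber (bIncl k V) v₀) × I =>
            (a.2 = 0 ∧ b.2 = 0) ∨ (a.2 = 1 ∧ b.2 = 1)) (f, t)) =
          (Quot.mk _ (f, sigI 0 t) : Susp (HomotopyFiber (bIncl k V) v₀)) := rfl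
      have hr : rMap k V v₀ (Quot.mk (fun a b : (HomotopyFiber (bIncl k V) v₀) × I =>
            (a.2 = 0 ∧ b.2 = 0) ∨ (a.2 = 1 ∧ b.2 = 1)) (f, t)) =
          rTil k V v₀ (f, t) := rfl
      have hq : ∀ y, qMap k V v₀ hv₀ y = qFun k V v₀ hv₀ y := fun _ => rfl
      rw [hL, ContinuousMap.comp_apply, hr, hq]
      by_cases hc : 1/4 ≤ tauR t.1 ∧ tauR t.1 ≤ 3/4
      · have h38 : 3/8 ≤ t.1 := le_of_tauR_ge hc.1
        have h58 : t.1 ≤ 5/8 := le_of_tauR_le hc.2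
        have hw : wI t = 0 := Subtype.ext (wR_eq_zero (by linarith) (by linarith))
        have hb : (rTil k V v₀ (f, t)).1.1.1.1 ∈ (𝓡∂ k).boundary V := by
          show f.1.2 (wI t) ∈ _
          rw [hw]
          have h0 : f.1.2 0 = (f.1.1 : V) := f.2.1
          rw [h0]
          exact f.1.1.2
        have hc' : 1/4 ≤ (rTil k V v₀ (f, t)).1.1.1.2.1 ∧
            (rTil k V v₀ (f, t)).1.1.1.2.1 ≤ 3/4 := hc
        unfold qFun
        rw [if_pos hc']
        unfold Bmap
        rw [dif_pos hb]
        apply congrArg (Quot.mk _)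
        refine Prod.ext_iff.mpr ⟨?_, ?_⟩
        · apply Subtype.ext
          refine Prod.ext_iff.mpr ⟨?_, ?_⟩
          · apply Subtype.ext
            show (f.1.1 : V) = f.1.2 (wI t)
            rw [hw]
            exact f.2.1.symm
          · show f.1.2 = repar (f.1.2, wI t)
            rw [hw, repar_zero]
        · exact Subtype.ext (sigR_s0 t.1)
      · have hc' : ¬(1/4 ≤ (rTil k V v₀ (f, t)).1.1.1.2.1 ∧
            (rTil k V v₀ (f, t)).1.1.1.2.1 ≤ 3/4) := hc
        unfold qFun
        rw [if_neg hc']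
        rcases not_and_or.1 hc with h | h
        · have h0 : tauR (tauR t.1) = 0 := tauR_eq_zero (le_of_not_ge h)
          exact Quot.sound (Or.inl ⟨Subtype.ext ((sigR_s0 t.1).trans h0), Subtype.ext h0⟩)
        · have h0 : tauR (tauR t.1) = 1 := tauR_eq_one (le_of_lt (not_le.1 h))
          exact Quot.sound (Or.inr ⟨Subtype.ext ((sigR_s0 t.1).trans h0), Subtype.ext h0⟩)

/-- The underlying map of the homotopy `r ∘ q ≃ id` on `P`. -/
def hPTil (p : I × HomotopyFiber (foldMap k V) v₀) : HomotopyFiber (foldMap k V) v₀ := by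
  refine ⟨(⟨(p.2.1.2 (wsI p.1 p.2.1.1.1.2), hhI p.1 p.2.1.1.1.2), ?_⟩,
    repar (p.2.1.2, wsI p.1 p.2.1.1.1.2)), ?_, ?_⟩
  · have hγ0 : p.2.1.2 0 = p.2.1.1.1.1 := p.2.2.1
    rcases lt_or_ge 0 (bR p.1.1) with hbp | hbp
    · have ha : aR p.1.1 = 1 := aR_eq_one_of_bR_pos hbp
      have hws : wsI p.1 p.2.1.1.1.2 = 0 := Subtype.ext (wsR_of_a1 _ ha)
      rcases p.2.1.1.2 with h | h | h
      · refine Or.inl (Subtype.ext ?_)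
        have hval : p.2.1.1.1.2.1 = 0 := by rw [h]; rfl
        show hhR p.1.1 p.2.1.1.1.2.1 = 0
        rw [hval]
        exact hhR_t0 _
      · refine Or.inr (Or.inl (Subtype.ext ?_))
        have hval : p.2.1.1.1.2.1 = 1 := by rw [h]; rfl
        show hhR p.1.1 p.2.1.1.1.2.1 = 1
        rw [hval]
        exact hhR_t1 _
      · exact Or.inr (Or.inr (by rw [hws, hγ0]; exact h))
    · have hb0 : bR p.1.1 = 0 := le_antisymm hbp (bR_nonneg _)
      rcases le_total p.2.1.1.1.2.1 (3/8) with h | h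
      · refine Or.inl (Subtype.ext ?_)
        show hhR p.1.1 p.2.1.1.1.2.1 = 0
        rw [hhR_of_b0 _ hb0]
        exact tauR_eq_zero (tauR_le_quarter h)
      · rcases le_total p.2.1.1.1.2.1 (5/8) with h' | h'
        · refine Or.inr (Or.inr ?_)
          have hw : wR (tauR p.2.1.1.1.2.1) = 0 :=
            wR_eq_zero (tauR_ge_quarter h) (tauR_le_threequarter h')
          have hws : wsI p.1 p.2.1.1.1.2 = 0 := Subtype.ext (by
            show wsR p.1.1 p.2.1.1.1.2.1 = 0
            rw [wsR, hw]; ring)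
          rw [hws, hγ0]
          rcases p.2.1.1.2 with h0 | h0 | h0
          · exfalso
            have hval : p.2.1.1.1.2.1 = 0 := by rw [h0]; rfl
            rw [hval] at h
            norm_num at h
          · exfalso
            have hval : p.2.1.1.1.2.1 = 1 := by rw [h0]; rfl
            rw [hval] at h'
            norm_num at h'
          · exact h0
        · refine Or.inr (Or.inl (Subtype.ext ?_))
          show hhR p.1.1 p.2.1.1.1.2.1 = 1
          rw [hhR_of_b0 _ hb0]
          exact tauR_eq_one (tauR_ge_threequarter h')
  · rw [repar_apply, affI_right_zero]; rfl
  · rw [repar_apply, affI_right_one]; exact p.2.2.2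

def hPMap : C(I × HomotopyFiber (foldMap k V) v₀, HomotopyFiber (foldMap k V) v₀) :=
  ⟨hPTil k V v₀, by
    have hγ : Continuous fun p : I × HomotopyFiber (foldMap k V) v₀ => p.2.1.2 :=
      continuous_snd.comp (continuous_subtype_val.comp continuous_snd)
    have htr : Continuous fun p : I × HomotopyFiber (foldMap k V) v₀ => p.2.1.1.1.2.1 :=
      continuous_subtype_val.comp (continuous_snd.comp (continuous_subtype_val.comp
        (continuous_fst.comp (continuous_subtype_val.comp continuous_snd))))
    have hsr : Continuous fun p : I × HomotopyFiber (foldMap k V) v₀ => p.1.1 :=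
      continuous_subtype_val.comp continuous_fst
    have hws : Continuous fun p : I × HomotopyFiber (foldMap k V) v₀ =>
        wsI p.1 p.2.1.1.1.2 :=
      Continuous.subtype_mk (continuous_wsR.comp (hsr.prodMk htr)) _
    unfold hPTil
    apply Continuous.subtype_mk
    apply Continuous.prodMk
    · apply Continuous.subtype_mk
      apply Continuous.prodMk
      · exact continuous_eval.comp (hγ.prodMk hws)
      · exact Continuous.subtype_mk (continuous_hhR.comp (hsr.prodMk htr)) _
    · exact repar.continuous.comp (hγ.prodMk hws)⟩

/-- The homotopy `r ∘ q ≃ id` on `P`. -/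
def hP : ContinuousMap.Homotopy
    ((rMap k V v₀).comp (qMap k V v₀ hv₀)) (ContinuousMap.id _) where
  toContinuousMap := hPMap k V v₀
  map_one_left := by
    intro x
    show hPTil k V v₀ (1, x) = x
    have hws : wsI (1 : I) x.1.1.1.2 = 0 := wsI_s1 _
    apply Pext
    · show (x.1.2 (wsI 1 x.1.1.1.2), hhI 1 x.1.1.1.2) = x.1.1.1
      have h1 : x.1.2 (wsI 1 x.1.1.1.2) = x.1.1.1.1 := by rw [hws]; exact x.2.1
      have h2 : hhI (1 : I) x.1.1.1.2 = x.1.1.1.2 := hhI_s1 _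
      rw [h1, h2]
    · show repar (x.1.2, wsI 1 x.1.1.1.2) = x.1.2
      rw [hws, repar_zero]
  map_zero_left := by
    intro x
    show hPTil k V v₀ (0, x) = rMap k V v₀ (qFun k V v₀ hv₀ x)
    by_cases hc : 1/4 ≤ x.1.1.1.2.1 ∧ x.1.1.1.2.1 ≤ 3/4
    · have hb : x.1.1.1.1 ∈ (𝓡∂ k).boundary V := by
        rcases x.1.1.2 with h | h | h
        · exfalso
          have hval : x.1.1.1.2.1 = 0 := by rw [h]; rfl
          have h14 := hc.1
          rw [hval] at h14
          norm_num at h14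
        · exfalso
          have hval : x.1.1.1.2.1 = 1 := by rw [h]; rfl
          have h34 := hc.2
          rw [hval] at h34
          norm_num at h34
        · exact h
      unfold qFun
      rw [if_pos hc]
      show hPTil k V v₀ (0, x) = rTil k V v₀ (Bmap k V v₀ hv₀ x, tauI x.1.1.1.2)
      unfold Bmap
      rw [dif_pos hb]
      have hws : wsI (0 : I) x.1.1.1.2 = wI (tauI x.1.1.1.2) := wsI_s0 _
      apply Pext
      · show (x.1.2 (wsI 0 x.1.1.1.2), hhI 0 x.1.1.1.2) =
          (x.1.2 (wI (tauI x.1.1.1.2)), tauI (tauI x.1.1.1.2))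
        rw [hws, hhI_s0]
      · show repar (x.1.2, wsI 0 x.1.1.1.2) = repar (x.1.2, wI (tauI x.1.1.1.2))
        rw [hws]
    · unfold qFun
      rw [if_neg hc]
      show hPTil k V v₀ (0, x) = rTil k V v₀ (f0 k V v₀ hv₀, tauI x.1.1.1.2)
      have ht14 : x.1.1.1.2.1 ≤ 1/4 ∨ 3/4 ≤ x.1.1.1.2.1 := by
        rcases not_and_or.1 hc with h | h
        · exact Or.inl (le_of_not_ge h)
        · exact Or.inr (le_of_not_ge h)
      have hkey : wR (tauR x.1.1.1.2.1) = 1 := by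
        rcases ht14 with h | h
        · rw [tauR_eq_zero h]; exact wR_zero
        · rw [tauR_eq_one h]; exact wR_one
      have hws1 : wsI (0 : I) x.1.1.1.2 = 1 :=
        Subtype.ext ((wsR_s0 _).trans hkey)
      apply Pext
      · show (x.1.2 (wsI 0 x.1.1.1.2), hhI 0 x.1.1.1.2) =
          ((f0 k V v₀ hv₀).1.2 (wI (tauI x.1.1.1.2)), tauI (tauI x.1.1.1.2))
        have h1 : x.1.2 (wsI 0 x.1.1.1.2) = v₀ := by rw [hws1]; exact x.2.2
        have h2 : (f0 k V v₀ hv₀).1.2 (wI (tauI x.1.1.1.2)) = v₀ := rfl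
        rw [h1, h2, hhI_s0]
      · ext u
        show repar (x.1.2, wsI 0 x.1.1.1.2) u =
          repar ((f0 k V v₀ hv₀).1.2, wI (tauI x.1.1.1.2)) u
        rw [hws1, repar_one_apply, x.2.2]
        rfl

end Main2

/-- for a compact manifold `V` with nonempty boundary and basepoint
`v₀ ∈ ∂V`, the homotopy fibre `P` of the folding map `p : DV → V` of the double is
homotopy equivalent to the suspension `ΣF` of the homotopy fibre `F` of the boundary
inclusion `∂V → V`. -/
theorem homotopyFiber_foldMap_homotopyEquiv_susp
    (k : ℕ) [NeZero k] (V : Type*) [TopologicalSpace V]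
    [ChartedSpace (EuclideanHalfSpace k) V]
    [IsManifold (𝓡∂ k) (⊤ : ℕ∞) V] [CompactSpace V]
    (v₀ : V) (hv₀ : v₀ ∈ (𝓡∂ k).boundary V) :
    Nonempty ((HomotopyFiber (foldMap k V) v₀) ≃ₕ Susp (HomotopyFiber (bIncl k V) v₀)) := by
  exact ⟨{ toFun := qMap k V v₀ hv₀
           invFun := rMap k V v₀
           left_inv := ⟨hP k V v₀ hv₀⟩
           right_inv := ⟨hSusp k V v₀ hv₀⟩ }⟩
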